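/- Let A, B, C ∈ ℂ and let x₁, y₁, z₁ ∈ ℂ with x₁ ≠ 0 and y₁ ≠ 0. Set x₀ = x₁/(16 y₁), y₀ = −x₁/(16 y₁²), z₀ = x₁ z₁/(256 y₁⁴). Then z₁² = x₁(x₁² + (20A y₁² − 20B y₁ + C) x₁ + 16 y₁⁵) holds if and only if z₀² = x₀³ − 4 y₀²(4 y₀ − 5A) x₀² + 20B y₀³ x₀ + C y₀⁴ holds. (Thus the two affine equations define birationally equivalent surfaces.) -/

import Mathlib

/-- The defining equation of the K3 surface `S(A:B:C)` is birationally equivalent to the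
alternative model `z₁² = x₁(x₁² + (20A y₁² − 20B y₁ + C)x₁ + 16 y₁⁵)`. -/
theorem stmt_0 (A B C : ℂ) (x₁ y₁ z₁ : ℂ) (hx₁ : x₁ ≠ 0) (hy₁ : y₁ ≠ 0)
    (x₀ y₀ z₀ : ℂ)
    (hx₀ : x₀ = x₁ / (16 * y₁))
    (hy₀ : y₀ = -(x₁ / (16 * y₁ ^ 2)))
    (hz₀ : z₀ = x₁ * z₁ / (256 * y₁ ^ 4)) :
    z₁ ^ 2 = x₁ * (x₁ ^ 2 + (20 * A * y₁ ^ 2 - 20 * B * y₁ + C) * x₁ + 16 * y₁ ^ 5) ↔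
      z₀ ^ 2 = x₀ ^ 3 - 4 * y₀ ^ 2 * (4 * y₀ - 5 * A) * x₀ ^ 2
        + 20 * B * y₀ ^ 3 * x₀ + C * y₀ ^ 4 := by
  subst hx₀ hy₀ hz₀
  have hy8 : (65536 : ℂ) * y₁ ^ 8 ≠ 0 := by
    simp [hy₁]
  have e : (x₁ / (16 * y₁)) ^ 3
      - 4 * (-(x₁ / (16 * y₁ ^ 2))) ^ 2 * (4 * (-(x₁ / (16 * y₁ ^ 2))) - 5 * A)
        * (x₁ / (16 * y₁)) ^ 2
      + 20 * B * (-(x₁ / (16 * y₁ ^ 2))) ^ 3 * (x₁ / (16 * y₁))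
      + C * (-(x₁ / (16 * y₁ ^ 2))) ^ 4
      = x₁ ^ 2 * (x₁ * (x₁ ^ 2 + (20 * A * y₁ ^ 2 - 20 * B * y₁ + C) * x₁ + 16 * y₁ ^ 5))
          / (65536 * y₁ ^ 8) := by
    rw [eq_div_iff hy8]
    field_simp
    ring_nf
  rw [e, div_pow, div_eq_div_iff (by simp [hy₁]) hy8]
  constructor
  · intro h
    linear_combination (x₁ ^ 2 * 65536 * y₁ ^ 8) * h
  · intro h
    have hx2 : (x₁ ^ 2 * (65536 * y₁ ^ 8) : ℂ) ≠ 0 := mul_ne_zero (pow_ne_zero _ hx₁) hy8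
    apply mul_left_cancel₀ hx2
    linear_combination h
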